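/- For a natural transformation η : S ⇒ T between functors S, T : C → Set, the pair γ_η = (id, (⊩^{γ_η}_a)) with y ⊩^{γ_η}_a x iff y = η_a(x) is a simulation CM^t(C;S) ⇀ CM^t(C;T); moreover the assignment η ↦ γ_η is functorial and faithful: γ_{1_S} is the identity simulation, γ_{η∘τ} = γ_η ∘ γ_τ, and γ_η = γ_θ implies η = θ. -/

import Mathlib

open CategoryTheory

universe w v u

/-- for a natural transformation `η : S ⇒ T` of `Set`-valued
functors, the data `γ_η = (id, ⊩)` with `y ⊩_a x ↔ y = η_a(x)` is a simulation
`CM^t(C;S) ⇀ CM^t(C;T)`; moreover `η ↦ γ_η` is functorial (identity to identity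
simulation, composite to composite simulation) and faithful. -/
theorem CMt_nat_trans_functorial_faithful {C : Type u} [Category.{v} C]
    (S T U : C ⥤ Type w) (η : S ⟶ T) :
    -- (Siml1) for γ_η
    (∀ (a : C) (x : S.obj a), ∃ y : T.obj a, y = η.app a x) ∧
    -- (Siml2): every S₁(f) ∈ S[a,b] is tracked by some T₁(g) ∈ T[a,b]
    (∀ (a b : C) (f : a ⟶ b), ∃ g : a ⟶ b,
      ∀ (x : S.obj a) (y : T.obj a), y = η.app a x →
        T.map g y = η.app b (S.map f x)) ∧
    -- γ_{1_S} is the identity simulation: its realizability relation is equality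
    (∀ (a : C) (y x : S.obj a), y = (𝟙 S : S ⟶ S).app a x ↔ y = x) ∧
    -- γ_{θ ∘ τ} = γ_θ ∘ γ_τ: the realizability relations agree
    (∀ (τ : S ⟶ T) (θ : T ⟶ U) (a : C) (z : U.obj a) (x : S.obj a),
      z = (τ ≫ θ).app a x ↔ ∃ y : T.obj a, z = θ.app a y ∧ y = τ.app a x) ∧
    -- faithfulness: γ_η = γ_θ implies η = θ
    (∀ θ : S ⟶ T,
      (∀ (a : C) (y : T.obj a) (x : S.obj a), y = η.app a x ↔ y = θ.app a x) →
      η = θ) := by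
  refine ⟨fun a x => ⟨η.app a x, rfl⟩, fun a b f => ⟨f, ?_⟩, fun a y x => by simp, fun τ θ a z x => ?_, fun θ h => ?_⟩
  · rintro x y rfl
    exact (NatTrans.naturality_apply (D := Type w) η f x).symm
  · simp
  · ext a x
    exact (h a (η.app a x) x).mp rfl
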